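/- arXiv:q-alg/9601012 — 2 statements merged into one kernel-verified Lean document; each statement's English description precedes it below -/
import Mathlib

section
/- Symmetries of the q-multinomial coefficients: for all integers k ≥ 1, L ≥ 0, 0 ≤ p ≤ k, and all integers a, the identities [L, a]^{(p)}_k = q^{(k−p)L − a} · [L, kL−a]^{(k−p)}_k and [L, a]^{(0)}_k = [L, kL−a]^{(0)}_k hold in the ring ℤ[q, q^{−1}] of Laurent polynomials over ℤ. -/
open scoped BigOperators
open scoped Classical

noncomputable section

/-- The indeterminate `q`, viewed as an element of the field `ℚ(q)` of rational
functions (into which the Laurent polynomial ring `ℤ[q,q⁻¹]` embeds). -/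
def qv : RatFunc ℚ := RatFunc.X

/-- The `q`-Pochhammer symbol `(q)ₙ = ∏_{j=1}^{n} (1 - qʲ)`, with `(q)₀ = 1`. -/
def qPoch (n : ℕ) : RatFunc ℚ := ∏ j ∈ Finset.range n, (1 - qv ^ (j + 1))

/-- The Gaussian polynomial (`q`-binomial coefficient)
`[L choose a]_q = (q)_L / ((q)_a (q)_{L-a})` for `0 ≤ a ≤ L`, and `0` otherwise. -/
def qBinom (L a : ℤ) : RatFunc ℚ :=
  if 0 ≤ a ∧ a ≤ L then qPoch L.toNat / (qPoch a.toNat * qPoch (L - a).toNat) else 0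

/-- The `q`-multinomial coefficient `[L, a]⁽ᵖ⁾_k`: the sum over all tuples
`(j₁, …, j_k)` of nonnegative integers with `j₁ + ⋯ + j_k = a` (encoded as
functions `j : ℕ → ℕ` supported on `{0, …, k-1}`, with `j ℓ` playing the role of
`j_{ℓ+1}`) of
`q^{Σ_{ℓ=1}^{k-1} (L - j_ℓ) j_{ℓ+1} - Σ_{ℓ=k-p}^{k-1} j_{ℓ+1}} · [L choose j₁]_q [j₁ choose j₂]_q ⋯ [j_{k-1} choose j_k]_q`.
It vanishes for `a` outside `0 ≤ a ≤ kL`. -/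
def qMult (k L p : ℕ) (a : ℤ) : RatFunc ℚ :=
  ∑ᶠ j : ℕ → ℕ,
    if (∀ ℓ, k ≤ ℓ → j ℓ = 0) ∧ (∑ ℓ ∈ Finset.range k, (j ℓ : ℤ)) = a then
      qv ^ (∑ ℓ ∈ Finset.range (k - 1), ((L : ℤ) - (j ℓ : ℤ)) * (j (ℓ + 1) : ℤ)
            - ∑ ℓ ∈ Finset.Ico (k - p) k, (j ℓ : ℤ))
        * (qBinom (L : ℤ) (j 0 : ℤ) *
            ∏ ℓ ∈ Finset.range (k - 1), qBinom (j ℓ : ℤ) (j (ℓ + 1) : ℤ))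
    else 0

lemma qv_ne_zero : qv ≠ 0 := RatFunc.X_ne_zero

lemma one_sub_qv_pow_ne_zero (j : ℕ) : (1 : RatFunc ℚ) - qv ^ (j+1) ≠ 0 := by
  have h : (1 : Polynomial ℚ) - Polynomial.X ^ (j+1) ≠ 0 := by
    intro h
    have := congrArg (Polynomial.coeff · (j+1)) h
    simp [Polynomial.coeff_one] at this
  intro hc
  apply h
  have h2 : (algebraMap (Polynomial ℚ) (RatFunc ℚ)) (1 - Polynomial.X ^ (j+1)) = 0 := by
    rw [map_sub, map_one, map_pow, RatFunc.algebraMap_X]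
    exact hc
  exact (map_eq_zero_iff _ (RatFunc.algebraMap_injective ℚ)).mp h2

lemma qPoch_ne_zero (n : ℕ) : qPoch n ≠ 0 :=
  Finset.prod_ne_zero_iff.mpr fun j _ => one_sub_qv_pow_ne_zero j

lemma qBinomN_eq {L a : ℕ} (h : a ≤ L) :
    qBinom (L : ℤ) (a : ℤ) = qPoch L / (qPoch a * qPoch (L - a)) := by
  rw [qBinom, if_pos ⟨Int.ofNat_nonneg a, by exact_mod_cast h⟩]
  norm_num

lemma qBinomN_eq_zero {L a : ℕ} (h : ¬ a ≤ L) : qBinom (L : ℤ) (a : ℤ) = 0 := by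
  rw [qBinom, if_neg]; rintro ⟨-, h2⟩; exact h (by exact_mod_cast h2)

lemma prod_qBinom_telescope (j : ℕ → ℕ) :
    ∀ n : ℕ, (∀ ℓ, ℓ < n → j (ℓ+1) ≤ j ℓ) →
    (∏ ℓ ∈ Finset.range n, qBinom (j ℓ : ℤ) (j (ℓ+1) : ℤ)) =
      qPoch (j 0) / (qPoch (j n) * ∏ ℓ ∈ Finset.range n, qPoch (j ℓ - j (ℓ+1))) := by
  intro n
  induction n with
  | zero =>
    intro _
    rw [Finset.prod_range_zero, Finset.prod_range_zero, mul_one,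
      div_self (qPoch_ne_zero _)]
  | succ n ih =>
    intro hc
    rw [Finset.prod_range_succ, Finset.prod_range_succ,
      ih (fun ℓ hl => hc ℓ (Nat.lt_succ_of_lt hl)), qBinomN_eq (hc n (Nat.lt_succ_self n))]
    have h1 := qPoch_ne_zero (j n)
    have h2 := qPoch_ne_zero (j (n+1))
    have h3 := qPoch_ne_zero (j n - j (n+1))
    have h4 : (∏ ℓ ∈ Finset.range n, qPoch (j ℓ - j (ℓ+1))) ≠ 0 :=
      Finset.prod_ne_zero_iff.mpr fun ℓ _ => qPoch_ne_zero _
    field_simp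

def boxkL (k L : ℕ) : Finset (ℕ → ℕ) :=
  (Finset.univ : Finset (Fin k → Fin (L+1))).image
    (fun g ℓ => if h : ℓ < k then (g ⟨ℓ, h⟩ : ℕ) else 0)

lemma mem_boxkL {k L : ℕ} {j : ℕ → ℕ} :
    j ∈ boxkL k L ↔ (∀ ℓ, k ≤ ℓ → j ℓ = 0) ∧ ∀ ℓ, ℓ < k → j ℓ ≤ L := by
  constructor
  · intro hj
    rcases Finset.mem_image.mp hj with ⟨g, -, rfl⟩
    constructor
    · intro ℓ hℓ; simp [Nat.not_lt.mpr hℓ]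
    · intro ℓ hℓ; simp only [dif_pos hℓ]
      exact Nat.lt_succ_iff.mp (g ⟨ℓ, hℓ⟩).2
  · rintro ⟨h1, h2⟩
    refine Finset.mem_image.mpr ⟨fun i => ⟨j i, Nat.lt_succ_of_le (h2 i i.2)⟩, Finset.mem_univ _, ?_⟩
    funext ℓ
    by_cases h : ℓ < k
    · simp [h]
    · simp [h, h1 ℓ (Nat.le_of_not_lt h)]

def compl' (k L : ℕ) (j : ℕ → ℕ) : ℕ → ℕ := fun ℓ => if ℓ < k then L - j (k - 1 - ℓ) else 0

lemma compl_mem {k L : ℕ} {j : ℕ → ℕ} (hj : j ∈ boxkL k L) : compl' k L j ∈ boxkL k L := by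
  rw [mem_boxkL]
  exact ⟨fun ℓ hℓ => by simp [compl', Nat.not_lt.mpr hℓ],
    fun ℓ hℓ => by simp [compl', hℓ]⟩

lemma complc_complc {k L : ℕ} {j : ℕ → ℕ} (hj : j ∈ boxkL k L) : compl' k L (compl' k L j) = j := by
  rw [mem_boxkL] at hj
  funext ℓ
  by_cases h : ℓ < k
  · have h2 : k - 1 - ℓ < k := by omega
    have h3 : k - 1 - (k - 1 - ℓ) = ℓ := by omega
    simp only [compl', if_pos h, if_pos h2, h3]
    have := hj.2 ℓ h
    omega
  · simp [compl', h, hj.1 ℓ (Nat.le_of_not_lt h)]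

def Bfull (k L : ℕ) (j : ℕ → ℕ) : RatFunc ℚ :=
  qBinom (L : ℤ) (j 0 : ℤ) * ∏ ℓ ∈ Finset.range (k - 1), qBinom (j ℓ : ℤ) (j (ℓ + 1) : ℤ)

lemma Bfull_chain {k L : ℕ} (hk : 1 ≤ k) {j : ℕ → ℕ} (hj0 : j 0 ≤ L)
    (hc : ∀ ℓ, ℓ < k - 1 → j (ℓ+1) ≤ j ℓ) :
    Bfull k L j = qPoch L /
      (qPoch (L - j 0) * (qPoch (j (k-1)) * ∏ ℓ ∈ Finset.range (k-1), qPoch (j ℓ - j (ℓ+1)))) := by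
  rw [Bfull, qBinomN_eq hj0, prod_qBinom_telescope j (k-1) hc]
  have h0 := qPoch_ne_zero (j 0)
  have h1 := qPoch_ne_zero (L - j 0)
  have h2 := qPoch_ne_zero (j (k-1))
  have h3 : (∏ ℓ ∈ Finset.range (k-1), qPoch (j ℓ - j (ℓ+1))) ≠ 0 :=
    Finset.prod_ne_zero_iff.mpr fun ℓ _ => qPoch_ne_zero _
  field_simp

lemma Bfull_compl {k L : ℕ} (hk : 1 ≤ k) {j : ℕ → ℕ} (hj : j ∈ boxkL k L) :
    Bfull k L (compl' k L j) = Bfull k L j := by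
  rw [mem_boxkL] at hj
  obtain ⟨hz, hb⟩ := hj
  by_cases hc : ∀ ℓ, ℓ < k - 1 → j (ℓ+1) ≤ j ℓ
  · -- chain case
    have hcc : ∀ ℓ, ℓ < k - 1 → compl' k L j (ℓ+1) ≤ compl' k L j ℓ := by
      intro ℓ hℓ
      have e1 : ℓ + 1 < k := by omega
      have e2 : ℓ < k := by omega
      simp only [compl', if_pos e1, if_pos e2]
      have h5 : k - 1 - (ℓ+1) < k - 1 := by omega
      have := hc _ h5
      have h6 : k - 1 - (ℓ+1) + 1 = k - 1 - ℓ := by omega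
      rw [h6] at this
      have := hb (k - 1 - ℓ) (by omega)
      omega
    have hc0 : compl' k L j 0 ≤ L := by
      simp only [compl', if_pos (by omega : 0 < k)]
      omega
    rw [Bfull_chain hk hc0 hcc, Bfull_chain hk (hb 0 hk) hc]
    have e0 : compl' k L j 0 = L - j (k-1) := by
      simp only [compl', if_pos (by omega : 0 < k)]
      norm_num
    have ek : compl' k L j (k-1) = L - j 0 := by
      simp only [compl', if_pos (by omega : k - 1 < k)]
      congr 2
      omega
    have eprod : (∏ ℓ ∈ Finset.range (k-1), qPoch (compl' k L j ℓ - compl' k L j (ℓ+1)))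
        = ∏ ℓ ∈ Finset.range (k-1), qPoch (j ℓ - j (ℓ+1)) := by
      rw [← Finset.prod_range_reflect (fun m => qPoch (j m - j (m+1))) (k-1)]
      apply Finset.prod_congr rfl
      intro ℓ hℓ
      rw [Finset.mem_range] at hℓ
      have e1 : ℓ < k := by omega
      have e2 : ℓ + 1 < k := by omega
      simp only [compl', if_pos e1, if_pos e2]
      have b1 := hb (k - 1 - ℓ) (by omega)
      have b2 := hb (k - 1 - (ℓ+1)) (by omega)
      have hcℓ : j (k - 1 - (ℓ+1) + 1) ≤ j (k - 1 - (ℓ+1)) := hc _ (by omega)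
      have h6 : k - 1 - (ℓ+1) + 1 = k - 1 - ℓ := by omega
      rw [h6] at hcℓ
      have e5 : k - 1 - 1 - ℓ = k - 1 - (ℓ+1) := by omega
      rw [e5, h6]
      congr 1
      omega
    rw [e0, ek, eprod]
    have hL := hb 0 hk
    have e3 : L - (L - j (k-1)) = j (k-1) := by have := hb (k-1) (by omega); omega
    rw [e3, mul_left_comm]
  · -- chain broken
    push_neg at hc
    obtain ⟨ℓ, hℓ, hbr⟩ := hc
    have z1 : Bfull k L j = 0 := by
      rw [Bfull]
      rw [Finset.prod_eq_zero (Finset.mem_range.mpr hℓ) (qBinomN_eq_zero (by omega))]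
      ring
    have z2 : Bfull k L (compl' k L j) = 0 := by
      rw [Bfull]
      have hm : k - 2 - ℓ ∈ Finset.range (k - 1) := Finset.mem_range.mpr (by omega)
      rw [Finset.prod_eq_zero hm]
      · ring
      · have e1 : k - 2 - ℓ < k := by omega
        have e2 : k - 2 - ℓ + 1 < k := by omega
        simp only [compl', if_pos e1, if_pos e2]
        apply qBinomN_eq_zero
        have b1 := hb (ℓ+1) (by omega)
        have e3 : k - 1 - (k - 2 - ℓ) = ℓ + 1 := by omega
        have e4 : k - 1 - (k - 2 - ℓ + 1) = ℓ := by omega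
        rw [e3, e4]
        omega
    rw [z1, z2]

lemma exponent_eq (k L p : ℕ) (hk : 1 ≤ k) (hp : p ≤ k) (a : ℤ) (j : ℕ → ℕ)
    (hb : ∀ ℓ, ℓ < k → j ℓ ≤ L) (hsum : ∑ ℓ ∈ Finset.range k, (j ℓ : ℤ) = a) :
    (∑ ℓ ∈ Finset.range (k-1), ((L:ℤ) - (j ℓ : ℤ)) * (j (ℓ+1) : ℤ)
        - ∑ ℓ ∈ Finset.Ico (k-p) k, (j ℓ : ℤ))
    = (((k:ℤ) - p) * L - a) +
      (∑ ℓ ∈ Finset.range (k-1), ((L:ℤ) - (compl' k L j ℓ : ℤ)) * (compl' k L j (ℓ+1) : ℤ)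
        - ∑ ℓ ∈ Finset.Ico (k - (k-p)) k, (compl' k L j ℓ : ℤ)) := by
  have hkk : k - (k - p) = p := Nat.sub_sub_self hp
  rw [hkk]
  have hQ : ∑ ℓ ∈ Finset.range (k-1), ((L:ℤ) - (compl' k L j ℓ : ℤ)) * (compl' k L j (ℓ+1) : ℤ)
      = ∑ ℓ ∈ Finset.range (k-1), ((L:ℤ) - (j ℓ : ℤ)) * (j (ℓ+1) : ℤ) := by
    rw [← Finset.sum_range_reflect (fun m => ((L:ℤ) - (j m : ℤ)) * (j (m+1) : ℤ)) (k-1)]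
    apply Finset.sum_congr rfl
    intro ℓ hℓ
    rw [Finset.mem_range] at hℓ
    have e1 : ℓ < k := by omega
    have e2 : ℓ + 1 < k := by omega
    simp only [compl', if_pos e1, if_pos e2]
    have b1 := hb (k - 1 - ℓ) (by omega)
    have b2 := hb (k - 1 - (ℓ+1)) (by omega)
    have e5 : k - 1 - 1 - ℓ = k - 1 - (ℓ+1) := by omega
    have e6 : k - 1 - (ℓ+1) + 1 = k - 1 - ℓ := by omega
    rw [e5, e6]
    push_cast [Nat.cast_sub b1, Nat.cast_sub b2]
    ring
  have hL1 : ∑ ℓ ∈ Finset.Ico p k, (compl' k L j ℓ : ℤ)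
      = ((k:ℤ) - p) * L - ∑ m ∈ Finset.range (k-p), (j m : ℤ) := by
    rw [Finset.sum_Ico_eq_sum_range]
    have step : ∀ i ∈ Finset.range (k - p), (compl' k L j (p + i) : ℤ)
        = (L : ℤ) - (j (k - p - 1 - i) : ℤ) := by
      intro i hi
      rw [Finset.mem_range] at hi
      have e1 : p + i < k := by omega
      simp only [compl', if_pos e1]
      have b1 := hb (k - 1 - (p + i)) (by omega)
      have e2 : k - 1 - (p + i) = k - p - 1 - i := by omega
      rw [← e2]
      push_cast [Nat.cast_sub b1]
      ring
    rw [Finset.sum_congr rfl step, Finset.sum_sub_distrib, Finset.sum_const,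
      Finset.sum_range_reflect (fun m => (j m : ℤ)) (k-p), Finset.card_range]
    rw [nsmul_eq_mul, Nat.cast_sub hp]
  have hsplit : ∑ ℓ ∈ Finset.range (k-p), (j ℓ : ℤ) + ∑ ℓ ∈ Finset.Ico (k-p) k, (j ℓ : ℤ) = a := by
    rw [Finset.sum_range_add_sum_Ico _ (Nat.sub_le k p), hsum]
  rw [hQ, hL1]
  linarith

def Eexp (k L p : ℕ) (j : ℕ → ℕ) : ℤ :=
  ∑ ℓ ∈ Finset.range (k - 1), ((L : ℤ) - (j ℓ : ℤ)) * (j (ℓ + 1) : ℤ)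
    - ∑ ℓ ∈ Finset.Ico (k - p) k, (j ℓ : ℤ)

def qMultTerm (k L p : ℕ) (a : ℤ) (j : ℕ → ℕ) : RatFunc ℚ :=
  if (∀ ℓ, k ≤ ℓ → j ℓ = 0) ∧ (∑ ℓ ∈ Finset.range k, (j ℓ : ℤ)) = a then
    qv ^ (Eexp k L p j) * Bfull k L j else 0

lemma qMult_eq_finsum (k L p : ℕ) (a : ℤ) : qMult k L p a = ∑ᶠ j, qMultTerm k L p a j := rfl

lemma term_support {k L p : ℕ} {a : ℤ} {j : ℕ → ℕ} (hk : 1 ≤ k)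
    (h : qMultTerm k L p a j ≠ 0) : j ∈ boxkL k L := by
  rw [qMultTerm] at h
  split_ifs at h with hcond
  · rcases hcond with ⟨hz, -⟩
    rw [mem_boxkL]
    refine ⟨hz, ?_⟩
    have hB : Bfull k L j ≠ 0 := fun h0 => h (by rw [h0, mul_zero])
    rw [Bfull] at hB
    have h1 : qBinom (L : ℤ) (j 0 : ℤ) ≠ 0 := fun h0 => hB (by rw [h0, zero_mul])
    have h2 : ∀ ℓ, ℓ < k - 1 → qBinom (j ℓ : ℤ) (j (ℓ+1) : ℤ) ≠ 0 := by
      intro ℓ hℓ h0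
      exact hB (by rw [Finset.prod_eq_zero (Finset.mem_range.mpr hℓ) h0, mul_zero])
    have hj0 : j 0 ≤ L := by
      by_contra hc; exact h1 (qBinomN_eq_zero hc)
    have hchain : ∀ ℓ, ℓ < k - 1 → j (ℓ+1) ≤ j ℓ := by
      intro ℓ hℓ
      by_contra hc; exact h2 ℓ hℓ (qBinomN_eq_zero hc)
    intro ℓ
    induction ℓ with
    | zero => intro _; exact hj0
    | succ n ih => intro hn; exact le_trans (hchain n (by omega)) (ih (by omega))
  · exact absurd rfl h

lemma qMult_eq_sum (k L p : ℕ) (hk : 1 ≤ k) (a : ℤ) :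
    qMult k L p a = ∑ j ∈ boxkL k L, qMultTerm k L p a j := by
  rw [qMult_eq_finsum]
  exact finsum_eq_sum_of_support_subset _ (fun j hj => term_support hk hj)

theorem qMult_symm_aux (k L p : ℕ) (hk : 1 ≤ k) (hp : p ≤ k) (a : ℤ) :
    qMult k L p a =
      qv ^ (((k : ℤ) - p) * L - a) * qMult k L (k - p) ((k : ℤ) * L - a) := by
  rw [qMult_eq_sum k L p hk a, qMult_eq_sum k L (k-p) hk, Finset.mul_sum]
  refine Finset.sum_nbij' (compl' k L) (compl' k L)
    (fun j hj => compl_mem hj) (fun j hj => compl_mem hj)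
    (fun j hj => complc_complc hj) (fun j hj => complc_complc hj) ?_
  intro j hj
  have hbox := hj
  rw [mem_boxkL] at hbox
  obtain ⟨hz, hb⟩ := hbox
  have hzc : ∀ ℓ, k ≤ ℓ → compl' k L j ℓ = 0 := fun ℓ hℓ => by
    simp [compl', Nat.not_lt.mpr hℓ]
  have hsumc : ∑ ℓ ∈ Finset.range k, (compl' k L j ℓ : ℤ)
      = (k : ℤ) * L - ∑ ℓ ∈ Finset.range k, (j ℓ : ℤ) := by
    have step : ∀ ℓ ∈ Finset.range k, (compl' k L j ℓ : ℤ) = (L : ℤ) - (j (k-1-ℓ) : ℤ) := by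
      intro ℓ hℓ
      rw [Finset.mem_range] at hℓ
      simp only [compl', if_pos hℓ]
      have := hb (k-1-ℓ) (by omega)
      push_cast [Nat.cast_sub this]
      ring
    rw [Finset.sum_congr rfl step, Finset.sum_sub_distrib, Finset.sum_const,
      Finset.sum_range_reflect (fun m => (j m : ℤ)) k, Finset.card_range, nsmul_eq_mul]
  rw [qMultTerm, qMultTerm]
  by_cases hsum : ∑ ℓ ∈ Finset.range k, (j ℓ : ℤ) = a
  · rw [if_pos ⟨hz, hsum⟩, if_pos ⟨hzc, by rw [hsumc, hsum]⟩]
    rw [Bfull_compl hk hj]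
    have hE := exponent_eq k L p hk hp a j hb hsum
    rw [show Eexp k L p j = (((k:ℤ) - p) * L - a) + Eexp k L (k-p) (compl' k L j) from hE]
    rw [zpow_add₀ qv_ne_zero]
    ring
  · rw [if_neg (fun hc => hsum hc.2), if_neg, mul_zero]
    rintro ⟨-, hc⟩
    rw [hsumc] at hc
    exact hsum (by linarith)

theorem qMult_p_eq_k (k L : ℕ) (hk : 1 ≤ k) (b : ℤ) :
    qMult k L k b = qv ^ (-b) * qMult k L 0 b := by
  rw [qMult_eq_sum k L k hk b, qMult_eq_sum k L 0 hk b, Finset.mul_sum]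
  apply Finset.sum_congr rfl
  intro j hj
  rw [qMultTerm, qMultTerm]
  by_cases hcond : (∀ ℓ, k ≤ ℓ → j ℓ = 0) ∧ (∑ ℓ ∈ Finset.range k, (j ℓ : ℤ)) = b
  · rw [if_pos hcond, if_pos hcond]
    have h1 : Eexp k L k j = -b + Eexp k L 0 j := by
      rw [Eexp, Eexp, Nat.sub_self, Nat.sub_zero]
      rw [show Finset.Ico 0 k = Finset.range k from by rw [Finset.range_eq_Ico]]
      rw [Finset.Ico_self, Finset.sum_empty, hcond.2]
      ring
    rw [h1, zpow_add₀ qv_ne_zero]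
    ring
  · rw [if_neg hcond, if_neg hcond, mul_zero]

/-- **Lemma 1 (symmetries of the `q`-multinomial coefficients).** For `k ≥ 1`,
`L ≥ 0`, `0 ≤ p ≤ k` and all integers `a`:
`[L,a]⁽ᵖ⁾_k = q^{(k-p)L - a} [L, kL-a]⁽ᵏ⁻ᵖ⁾_k` and `[L,a]⁽⁰⁾_k = [L, kL-a]⁽⁰⁾_k`. -/
theorem qMult_symm (k L p : ℕ) (hk : 1 ≤ k) (hp : p ≤ k) (a : ℤ) :
    qMult k L p a =
        qv ^ (((k : ℤ) - p) * L - a) * qMult k L (k - p) ((k : ℤ) * L - a) ∧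
      qMult k L 0 a = qMult k L 0 ((k : ℤ) * L - a) := by
  refine ⟨qMult_symm_aux k L p hk hp a, ?_⟩
  have h1 := qMult_symm_aux k L 0 hk (Nat.zero_le k) a
  rw [Nat.sub_zero] at h1
  rw [h1, qMult_p_eq_k k L hk ((k : ℤ) * L - a), ← mul_assoc, ← zpow_add₀ qv_ne_zero]
  norm_num
end
end

section
/- Recurrence for the frequency-partition generating polynomials: for all integers k ≥ 1, 1 ≤ i ≤ k+1, 1 ≤ i' ≤ k+1 and L ≥ 3, G_{k,i,i';L}(q) = Σ_{ℓ=0}^{i'−1} q^{ℓ(L−1)} · G_{k,i,k−ℓ+1;L−1}(q). -/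
open scoped BigOperators
open scoped Classical

noncomputable section

/-- The generating polynomial `G_{k,i,i';L}(q)`: the sum over all sequences
`(f₁, …, f_{L-1})` of nonnegative integers (encoded as functions `f : ℕ → ℕ`
supported on `{1, …, L-1}`) with `f₁ ≤ i-1`, `f_{L-1} ≤ i'-1` and
`f_j + f_{j+1} ≤ k` for `1 ≤ j ≤ L-2`, of `q^{Σ_{j=1}^{L-1} j f_j}`. -/
def Gpoly (k i i' L : ℕ) : RatFunc ℚ :=
  ∑ᶠ f : ℕ → ℕ,
    if (∀ j, f j ≠ 0 → 1 ≤ j ∧ j ≤ L - 1) ∧ f 1 ≤ i - 1 ∧ f (L - 1) ≤ i' - 1 ∧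
        (∀ j, 1 ≤ j → j ≤ L - 2 → f j + f (j + 1) ≤ k) then
      qv ^ (∑ j ∈ Finset.Icc 1 (L - 1), j * f j)
    else 0

def Pcond (k i i' L : ℕ) (f : ℕ → ℕ) : Prop :=
  (∀ j, f j ≠ 0 → 1 ≤ j ∧ j ≤ L - 1) ∧ f 1 ≤ i - 1 ∧ f (L - 1) ≤ i' - 1 ∧
    (∀ j, 1 ≤ j → j ≤ L - 2 → f j + f (j + 1) ≤ k)

lemma Pcond_bound {k i i' L f} (h : Pcond k i i' L f) (j : ℕ) : f j ≤ k + i + i' := by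
  obtain ⟨hs, h1, h2, hm⟩ := h
  by_cases hz : f j = 0
  · omega
  · obtain ⟨hj1, hj2⟩ := hs j hz
    rcases le_or_gt j (L - 2) with hle | hgt
    · have := hm j hj1 hle; omega
    · have hj : j = L - 1 := by omega
      rw [hj]; omega

lemma Pset_finite (k i i' L : ℕ) : {f : ℕ → ℕ | Pcond k i i' L f}.Finite := by
  set N := k + i + i'
  rw [Set.finite_coe_iff.symm]
  have hb : ∀ f : {f : ℕ → ℕ // Pcond k i i' L f}, ∀ j, f.1 j < N + 1 := by
    intro f j; have := Pcond_bound f.2 j; omega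
  apply Finite.of_injective (fun f : {f : ℕ → ℕ // Pcond k i i' L f} =>
    (fun j : Fin L => (⟨f.1 j, hb f j⟩ : Fin (N + 1))))
  intro f g hfg
  ext j
  by_cases hj : j < L
  · have := congrFun hfg ⟨j, hj⟩
    simpa using congrArg Fin.val this
  · have hf : f.1 j = 0 := by
      by_contra h; have := f.2.1 j h; omega
    have hg : g.1 j = 0 := by
      by_contra h; have := g.2.1 j h; omega
    rw [hf, hg]

lemma Gpoly_eq_sum (k i i' L : ℕ) :
    Gpoly k i i' L = ∑ f ∈ (Pset_finite k i i' L).toFinset,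
      qv ^ (∑ j ∈ Finset.Icc 1 (L - 1), j * f j) := by
  rw [Gpoly, ← finsum_mem_coe_finset, Set.Finite.coe_toFinset, finsum_mem_def]
  apply finsum_congr
  intro f
  rw [Set.indicator_apply]
  simp only [Set.mem_setOf_eq, Pcond]
  split_ifs with h
  · rfl
  · rfl

lemma Pcond_down {k i i' L l : ℕ} (hL : 3 ≤ L) (hl : l < i') {f : ℕ → ℕ}
    (hf : Pcond k i i' L f) (hfl : f (L - 1) = l) :
    Pcond k i (k - l + 1) (L - 1) (Function.update f (L - 1) 0) := by
  obtain ⟨hs, h1, h2, hm⟩ := hf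
  refine ⟨?_, ?_, ?_, ?_⟩
  · intro j hj
    rw [Function.update_apply] at hj
    split_ifs at hj with h
    · exact absurd rfl hj
    · have := hs j hj; omega
  · rw [Function.update_apply, if_neg (by omega)]; exact h1
  · rw [Function.update_apply, if_neg (by omega)]
    have hmm := hm (L - 2) (by omega) (by omega)
    have he : L - 2 + 1 = L - 1 := by omega
    rw [he, hfl] at hmm
    rw [show L - 1 - 1 = L - 2 from by omega]
    omega
  · intro j hj1 hj2
    rw [Function.update_apply, Function.update_apply, if_neg (by omega), if_neg (by omega)]
    exact hm j hj1 (by omega)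

lemma Pcond_up {k i i' L l : ℕ} (hL : 3 ≤ L) (hl : l < i') (hi'2 : i' ≤ k + 1) {g : ℕ → ℕ}
    (hg : Pcond k i (k - l + 1) (L - 1) g) :
    Pcond k i i' L (Function.update g (L - 1) l) := by
  obtain ⟨hs, h1, h2, hm⟩ := hg
  have hlk : l ≤ k := by omega
  refine ⟨?_, ?_, ?_, ?_⟩
  · intro j hj
    rw [Function.update_apply] at hj
    split_ifs at hj with h
    · omega
    · have := hs j hj; omega
  · rw [Function.update_apply, if_neg (by omega)]; exact h1
  · rw [Function.update_apply, if_pos rfl]; omega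
  · intro j hj1 hj2
    rw [Function.update_apply, Function.update_apply]
    rcases eq_or_lt_of_le hj2 with he | hlt
    · rw [if_neg (by omega), if_pos (by omega)]
      have h2' := h2
      have hee : L - 1 - 1 = L - 2 := by omega
      rw [hee] at h2'
      have : g j ≤ k - l + 1 - 1 := by rw [← he] at h2'; exact h2'
      omega
    · rw [if_neg (by omega), if_neg (by omega)]
      exact hm j hj1 (by omega)

lemma weight_split {L : ℕ} (hL : 3 ≤ L) (f : ℕ → ℕ) :
    ∑ j ∈ Finset.Icc 1 (L - 1), j * f j
      = (∑ j ∈ Finset.Icc 1 (L - 1 - 1), j * (Function.update f (L - 1) 0) j)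
        + (L - 1) * f (L - 1) := by
  have h1 : L - 1 = (L - 2) + 1 := by omega
  have h2 : L - 1 - 1 = L - 2 := by omega
  rw [h2]
  conv_lhs => rw [h1]
  rw [Finset.sum_Icc_succ_top (by omega)]
  rw [← h1]
  congr 1
  apply Finset.sum_congr rfl
  intro j hj
  simp only [Finset.mem_Icc] at hj
  rw [Function.update_apply, if_neg (by omega)]

/-- **Recurrence (4.1).** For `k ≥ 1`, `1 ≤ i ≤ k+1`, `1 ≤ i' ≤ k+1` and `L ≥ 3`:
`G_{k,i,i';L}(q) = Σ_{ℓ=0}^{i'-1} q^{ℓ(L-1)} G_{k,i,k-ℓ+1;L-1}(q)`. -/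
theorem Gpoly_recurrence (k i i' L : ℕ) (hk : 1 ≤ k) (hi1 : 1 ≤ i) (hi2 : i ≤ k + 1)
    (hi'1 : 1 ≤ i') (hi'2 : i' ≤ k + 1) (hL : 3 ≤ L) :
    Gpoly k i i' L =
      ∑ l ∈ Finset.range i', qv ^ (l * (L - 1)) * Gpoly k i (k - l + 1) (L - 1) := by

  rw [Gpoly_eq_sum]
  have hrhs : ∀ l, Gpoly k i (k - l + 1) (L - 1)
      = ∑ g ∈ (Pset_finite k i (k - l + 1) (L - 1)).toFinset,
          qv ^ (∑ j ∈ Finset.Icc 1 (L - 1 - 1), j * g j) := fun l => Gpoly_eq_sum _ _ _ _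
  simp only [hrhs, Finset.mul_sum, ← pow_add]
  -- expand LHS into a double sum over l
  have hLHS : ∀ f ∈ (Pset_finite k i i' L).toFinset,
      qv ^ (∑ j ∈ Finset.Icc 1 (L - 1), j * f j)
      = ∑ l ∈ Finset.range i',
          if f (L - 1) = l then qv ^ (∑ j ∈ Finset.Icc 1 (L - 1), j * f j) else 0 := by
    intro f hf
    rw [Set.Finite.mem_toFinset] at hf
    rw [Finset.sum_ite_eq (Finset.range i') (f (L - 1))]
    rw [if_pos]
    rw [Finset.mem_range]
    have := hf.2.2.1
    omega
  rw [Finset.sum_congr rfl hLHS, Finset.sum_comm]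
  apply Finset.sum_congr rfl
  intro l hl
  rw [Finset.mem_range] at hl
  rw [← Finset.sum_filter]
  apply Finset.sum_nbij' (fun f => Function.update f (L - 1) 0)
    (fun g => Function.update g (L - 1) l)
  · intro f hf
    simp only [Finset.mem_filter, Set.Finite.mem_toFinset] at hf ⊢
    exact Pcond_down hL hl hf.1 hf.2
  · intro g hg
    simp only [Finset.mem_filter, Set.Finite.mem_toFinset] at hg ⊢
    refine ⟨Pcond_up hL hl hi'2 hg, ?_⟩
    rw [Function.update_apply, if_pos rfl]
  · intro f hf
    simp only [Finset.mem_filter, Set.Finite.mem_toFinset] at hf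
    ext j
    rw [Function.update_apply, Function.update_apply]
    split_ifs with h
    · rw [h, hf.2]
    · rfl
  · intro g hg
    simp only [Set.Finite.mem_toFinset] at hg
    ext j
    rw [Function.update_apply, Function.update_apply]
    split_ifs with h
    · rw [h]
      by_contra hne
      have := hg.1 (L - 1) (fun hz => hne hz.symm)
      omega
    · rfl
  · intro f hf
    simp only [Finset.mem_filter, Set.Finite.mem_toFinset] at hf
    rw [weight_split hL f, hf.2]
    congr 1
    ring
end
end
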